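/- arXiv:1002.4280 — 3 statements merged into one kernel-verified Lean document; each statement's English description precedes it below -/
import Mathlib

section
/- For any finite-dimensional Lie algebra L over a field, L is capable (i.e., there exists a Lie algebra H with L ≅ H/Z(H)) if and only if the epicenter Z*(L) is trivial, where Z*(L) is the intersection of φ(Z(E)) over all central extensions φ: E → L. -/
open Module Function

universe u v

/-! ### Product of Lie algebras -/

section ProdLie

variable (k : Type) [Field k]
variable (L₁ : Type*) (L₂ : Type*) [LieRing L₁] [LieRing L₂]

instance Prod.instLieRing : LieRing (L₁ × L₂) where
  bracket x y := (⁅x.1, y.1⁆, ⁅x.2, y.2⁆)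
  add_lie x y z := by ext <;> exact add_lie _ _ _
  lie_add x y z := by ext <;> exact lie_add _ _ _
  lie_self x := by ext <;> exact lie_self _
  leibniz_lie x y z := by ext <;> exact leibniz_lie _ _ _

instance Prod.instLieAlgebra [LieAlgebra k L₁] [LieAlgebra k L₂] :
    LieAlgebra k (L₁ × L₂) where
  lie_smul c x y := by ext <;> exact lie_smul _ _ _

end ProdLie

section Defs

variable (k : Type) [Field k]
variable (L : Type u) [LieRing L] [LieAlgebra k L]

/-- The derived subalgebra `L² = ⁅L, L⁆` as a Lie ideal. -/
def derived : LieIdeal k L := ⁅(⊤ : LieIdeal k L), (⊤ : LieIdeal k L)⁆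

/-- A Lie algebra is capable if it is isomorphic to `H / Z(H)` for some Lie algebra `H`. -/
def IsCapable : Prop :=
  ∃ (H : Type u) (_ : LieRing H) (_ : LieAlgebra k H),
    Nonempty (L ≃ₗ⁅k⁆ H ⧸ LieAlgebra.center k H)

/-- A surjective Lie algebra morphism with central kernel. -/
def IsCentralExtension {E : Type u} [LieRing E] [LieAlgebra k E] (φ : E →ₗ⁅k⁆ L) : Prop :=
  Function.Surjective φ ∧ φ.ker ≤ LieAlgebra.center k E

/-- The epicenter `Z^*(L)`: the intersection of the images `φ(Z(E))` over all central
extensions `φ : E → L`. -/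
def epicenter : LieIdeal k L :=
  sInf {I : LieIdeal k L |
    ∃ (E : Type u) (_ : LieRing E) (_ : LieAlgebra k E) (φ : E →ₗ⁅k⁆ L),
      IsCentralExtension k L φ ∧ (I : Set L) = φ '' (LieAlgebra.center k E)}

/-! ### The nonabelian exterior square -/

/-- The defining relations of the nonabelian exterior square of a Lie algebra. -/
def exteriorRels : Set (FreeLieAlgebra k (L × L)) :=
  {a | (∃ (x x' y : L), a = FreeLieAlgebra.of k (x + x', y) - FreeLieAlgebra.of k (x, y)
          - FreeLieAlgebra.of k (x', y)) ∨
       (∃ (x y y' : L), a = FreeLieAlgebra.of k (x, y + y') - FreeLieAlgebra.of k (x, y)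
          - FreeLieAlgebra.of k (x, y')) ∨
       (∃ (c : k) (x y : L), a = FreeLieAlgebra.of k (c • x, y) - c • FreeLieAlgebra.of k (x, y)) ∨
       (∃ (c : k) (x y : L), a = FreeLieAlgebra.of k (x, c • y) - c • FreeLieAlgebra.of k (x, y)) ∨
       (∃ (x x' y : L), a = FreeLieAlgebra.of k (⁅x, x'⁆, y) - FreeLieAlgebra.of k (x, ⁅x', y⁆)
          + FreeLieAlgebra.of k (x', ⁅x, y⁆)) ∨
       (∃ (x y y' : L), a = FreeLieAlgebra.of k (x, ⁅y, y'⁆) - FreeLieAlgebra.of k (⁅y', x⁆, y)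
          + FreeLieAlgebra.of k (⁅y, x⁆, y')) ∨
       (∃ (x y x' y' : L), a = ⁅FreeLieAlgebra.of k (x, y), FreeLieAlgebra.of k (x', y')⁆
          + FreeLieAlgebra.of k (⁅y, x⁆, ⁅x', y'⁆)) ∨
       (∃ (x : L), a = FreeLieAlgebra.of k (x, x))}

/-- The ideal of relations of the nonabelian exterior square. -/
noncomputable def exteriorIdeal : LieIdeal k (FreeLieAlgebra k (L × L)) :=
  LieSubmodule.lieSpan k _ (exteriorRels k L)

/-- The nonabelian exterior square `L ∧ L`. -/
abbrev ExteriorSquare := FreeLieAlgebra k (L × L) ⧸ exteriorIdeal k L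

variable {L} in
/-- The element `x ∧ y` of the nonabelian exterior square. -/
noncomputable def wedge (x y : L) : ExteriorSquare k L :=
  LieSubmodule.Quotient.mk' (exteriorIdeal k L) (FreeLieAlgebra.of k (x, y))

/-- The exterior center `Z^∧(L) = {x | x ∧ y = 0 for all y}`. -/
def exteriorCenter : Set L := {x | ∀ y : L, wedge k x y = 0}

end Defs

section Defs2

variable (k : Type) [Field k]
variable (L : Type u) [LieRing L] [LieAlgebra k L]

/-- The canonical free presentation `F(L) → L`. -/
noncomputable def pres : FreeLieAlgebra k L →ₗ⁅k⁆ L := FreeLieAlgebra.lift k id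

/-- The Schur multiplier computed from a presentation `ρ : F(L) → L'`,
namely `(ker ρ ∩ F²) / ⁅ker ρ, F⁆`. -/
abbrev multOf {L' : Type v} [LieRing L'] [LieAlgebra k L']
    (ρ : FreeLieAlgebra k L →ₗ⁅k⁆ L') : Type _ :=
  (ρ.ker ⊓ derived k (FreeLieAlgebra k L)).toSubmodule ⧸
    ((⁅ρ.ker, (⊤ : LieIdeal k (FreeLieAlgebra k L))⁆ :
        LieIdeal k (FreeLieAlgebra k L)).toSubmodule.comap
      (ρ.ker ⊓ derived k (FreeLieAlgebra k L)).toSubmodule.subtype)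

/-- The Schur multiplier `M(L) = (R ∩ F²)/⁅R, F⁆` for the canonical free
presentation `0 → R → F(L) → L → 0`. -/
noncomputable abbrev SchurMultiplier : Type _ := multOf k L (pres k L)

/-- The quotient map `L → L ⧸ N` as a morphism of Lie algebras. -/
def lieQuotMk (N : LieIdeal k L) : L →ₗ⁅k⁆ L ⧸ N :=
  { toLinearMap := (N : Submodule k L).mkQ
    map_lie' := rfl }

/-- The canonical presentation `F(L) → L ⧸ N` of a quotient of `L`. -/
noncomputable def presQ (N : LieIdeal k L) : FreeLieAlgebra k L →ₗ⁅k⁆ L ⧸ N :=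
  (lieQuotMk k L N).comp (pres k L)

end Defs2

section maps

variable (k : Type) [Field k]
variable (L : Type u) [LieRing L] [LieAlgebra k L]

lemma ker_le_kerQ (N : LieIdeal k L) : (pres k L).ker ≤ (presQ k L N).ker := by
  intro x hx
  rw [LieHom.mem_ker] at hx ⊢
  simp [presQ, LieHom.comp_apply, hx, lieQuotMk]

/-- The natural map `M(L) → M(L/N)` on Schur multipliers induced by a
(central) ideal `N` of `L`. -/
noncomputable def multMap (N : LieIdeal k L) :
    SchurMultiplier k L →ₗ[k] multOf k L (presQ k L N) :=
  Submodule.mapQ _ _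
    (Submodule.inclusion (by
      exact_mod_cast inf_le_inf_right (derived k (FreeLieAlgebra k L)) (ker_le_kerQ k L N)))
    (by
      intro x hx
      simp only [Submodule.mem_comap] at hx ⊢
      have hmono : (⁅(pres k L).ker, (⊤ : LieIdeal k (FreeLieAlgebra k L))⁆ :
          LieIdeal k (FreeLieAlgebra k L)) ≤
          ⁅(presQ k L N).ker, (⊤ : LieIdeal k (FreeLieAlgebra k L))⁆ :=
        LieSubmodule.mono_lie_left _ (ker_le_kerQ k L N)
      exact hmono hx)

end maps

section lift

variable {k : Type} [Field k]
variable {L : Type u} [LieRing L] [LieAlgebra k L]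
variable {L' : Type v} [LieRing L'] [LieAlgebra k L']

/-- Universal property of quotients of Lie algebras. -/
def lieQuotLift (I : LieIdeal k L) (f : L →ₗ⁅k⁆ L') (h : I ≤ f.ker) : (L ⧸ I) →ₗ⁅k⁆ L' :=
  { toLinearMap := (I : Submodule k L).liftQ f.toLinearMap (fun x hx => by
      have := h hx; rwa [LieHom.mem_ker] at this)
    map_lie' := by
      rintro ⟨x⟩ ⟨y⟩
      exact f.map_lie x y }

@[simp] lemma lieQuotLift_mk (I : LieIdeal k L) (f : L →ₗ⁅k⁆ L') (h : I ≤ f.ker) (x : L) :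
    lieQuotLift I f h (lieQuotMk k L I x) = f x := rfl

end lift

section extmaps

variable (k : Type) [Field k]
variable (L : Type u) [LieRing L] [LieAlgebra k L]

/-- `x ∧ y` rewritten via the quotient morphism. -/
lemma wedge_def (x y : L) :
    wedge k x y = lieQuotMk k _ (exteriorIdeal k L) (FreeLieAlgebra.of k (x, y)) := rfl

/-- The lift to the free Lie algebra of the map `(x, y) ↦ x ∧ y` valued in the
exterior square of a quotient of `L`. -/
noncomputable def extAux (N : LieIdeal k L) :
    FreeLieAlgebra k (L × L) →ₗ⁅k⁆ ExteriorSquare k (L ⧸ N) :=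
  FreeLieAlgebra.lift k fun p => wedge k (lieQuotMk k L N p.1) (lieQuotMk k L N p.2)

lemma wedge_mem_rel_zero {M : Type v} [LieRing M] [LieAlgebra k M]
    {a : FreeLieAlgebra k (M × M)} (ha : a ∈ exteriorRels k M) :
    lieQuotMk k _ (exteriorIdeal k M) a = 0 := by
  have h : a ∈ exteriorIdeal k M := LieSubmodule.subset_lieSpan ha
  show (exteriorIdeal k M : Submodule k (FreeLieAlgebra k (M × M))).mkQ a = 0
  rw [Submodule.mkQ_apply, Submodule.Quotient.mk_eq_zero]
  exact h

lemma extAux_rels (N : LieIdeal k L) : exteriorIdeal k L ≤ (extAux k L N).ker := by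
  rw [exteriorIdeal, LieSubmodule.lieSpan_le]
  intro a ha
  rw [SetLike.mem_coe, LieHom.mem_ker]
  set q := lieQuotMk k L N with hq
  have key : ∀ x y : L, extAux k L N (FreeLieAlgebra.of k (x, y)) =
      lieQuotMk k _ (exteriorIdeal k (L ⧸ N)) (FreeLieAlgebra.of k (q x, q y)) := by
    intro x y; rw [extAux, FreeLieAlgebra.lift_of_apply]; rfl
  obtain h|h|h|h|h|h|h|h := ha
  · obtain ⟨x, x', y, rfl⟩ := h
    simp only [map_sub, key]
    rw [← map_sub, ← map_sub]
    apply wedge_mem_rel_zero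
    exact Or.inl ⟨q x, q x', q y, by rw [map_add]⟩
  · obtain ⟨x, y, y', rfl⟩ := h
    simp only [map_sub, key]
    rw [← map_sub, ← map_sub]
    apply wedge_mem_rel_zero
    exact Or.inr (Or.inl ⟨q x, q y, q y', by rw [map_add]⟩)
  · obtain ⟨c, x, y, rfl⟩ := h
    simp only [map_sub, map_smul, key]
    rw [← map_smul (lieQuotMk k _ (exteriorIdeal k (L ⧸ N))) c
      (FreeLieAlgebra.of k (q x, q y)), ← map_sub]
    apply wedge_mem_rel_zero
    exact Or.inr (Or.inr (Or.inl ⟨c, q x, q y, rfl⟩))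
  · obtain ⟨c, x, y, rfl⟩ := h
    simp only [map_sub, map_smul, key]
    rw [← map_smul (lieQuotMk k _ (exteriorIdeal k (L ⧸ N))) c
      (FreeLieAlgebra.of k (q x, q y)), ← map_sub]
    apply wedge_mem_rel_zero
    exact Or.inr (Or.inr (Or.inr (Or.inl ⟨c, q x, q y, rfl⟩)))
  · obtain ⟨x, x', y, rfl⟩ := h
    simp only [map_sub, map_add, key]
    rw [← map_sub, ← map_add]
    apply wedge_mem_rel_zero
    refine Or.inr (Or.inr (Or.inr (Or.inr (Or.inl ⟨q x, q x', q y, ?_⟩))))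
    simp [LieHom.map_lie]
  · obtain ⟨x, y, y', rfl⟩ := h
    simp only [map_sub, map_add, key]
    rw [← map_sub, ← map_add]
    apply wedge_mem_rel_zero
    refine Or.inr (Or.inr (Or.inr (Or.inr (Or.inr (Or.inl ⟨q x, q y, q y', ?_⟩)))))
    simp [LieHom.map_lie]
  · obtain ⟨x, y, x', y', rfl⟩ := h
    simp only [map_add, LieHom.map_lie, key]
    rw [← LieHom.map_lie, ← map_add]
    apply wedge_mem_rel_zero
    refine Or.inr (Or.inr (Or.inr (Or.inr (Or.inr (Or.inr (Or.inl
      ⟨q x, q y, q x', q y', ?_⟩))))))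
    simp [LieHom.map_lie]
  · obtain ⟨x, rfl⟩ := h
    rw [key]
    apply wedge_mem_rel_zero
    exact Or.inr (Or.inr (Or.inr (Or.inr (Or.inr (Or.inr (Or.inr ⟨q x, rfl⟩))))))

/-- The natural morphism `L ∧ L → (L/N) ∧ (L/N)` of exterior squares. -/
noncomputable def extSqMap (N : LieIdeal k L) :
    ExteriorSquare k L →ₗ⁅k⁆ ExteriorSquare k (L ⧸ N) :=
  lieQuotLift (exteriorIdeal k L) (extAux k L N) (extAux_rels k L N)

/-- The commutator morphism `L ∧ L → L`, `x ∧ y ↦ ⁅x, y⁆`. -/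
noncomputable def commutatorMap : ExteriorSquare k L →ₗ⁅k⁆ L :=
  lieQuotLift (exteriorIdeal k L) (FreeLieAlgebra.lift k fun p : L × L => ⁅p.1, p.2⁆)
    (by
      rw [exteriorIdeal, LieSubmodule.lieSpan_le]
      intro a ha
      rw [SetLike.mem_coe, LieHom.mem_ker]
      obtain h|h|h|h|h|h|h|h := ha
      · obtain ⟨x, x', y, rfl⟩ := h
        simp [FreeLieAlgebra.lift_of_apply, add_lie]
      · obtain ⟨x, y, y', rfl⟩ := h
        simp [FreeLieAlgebra.lift_of_apply, lie_add]
      · obtain ⟨c, x, y, rfl⟩ := h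
        simp [FreeLieAlgebra.lift_of_apply, smul_lie]
      · obtain ⟨c, x, y, rfl⟩ := h
        simp [FreeLieAlgebra.lift_of_apply, lie_smul]
      · obtain ⟨x, x', y, rfl⟩ := h
        simp only [map_sub, map_add, FreeLieAlgebra.lift_of_apply, lie_lie]
        abel
      · obtain ⟨x, y, y', rfl⟩ := h
        simp only [map_sub, map_add, FreeLieAlgebra.lift_of_apply, lie_lie]
        rw [leibniz_lie x y' y, ← lie_skew y ⁅x, y'⁆]
        abel
      · obtain ⟨x, y, x', y', rfl⟩ := h
        simp only [map_add, LieHom.map_lie, FreeLieAlgebra.lift_of_apply]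
        rw [← lie_skew y x]
        simp
      · obtain ⟨x, rfl⟩ := h
        simp [FreeLieAlgebra.lift_of_apply])

end extmaps

section more

variable (k : Type) [Field k]
variable (L : Type u) [LieRing L] [LieAlgebra k L]

/-- A Lie algebra is a Heisenberg algebra `H(m)` (of dimension `2m + 1`) iff its derived
subalgebra coincides with its centre and is one-dimensional, and it has dimension `2m + 1`. -/
def IsHeisenberg (m : ℕ) : Prop :=
  derived k L = LieAlgebra.center k L ∧ Module.finrank k L = 2 * m + 1 ∧
    Module.finrank k (derived k L) = 1

/-- A vector space regarded as an abelian Lie algebra. -/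
def AbelianLieOf (V : Type v) : Type v := V

instance (V : Type v) [AddCommGroup V] : AddCommGroup (AbelianLieOf V) :=
  inferInstanceAs (AddCommGroup V)

instance (V : Type v) [AddCommGroup V] [Module k V] : Module k (AbelianLieOf V) :=
  inferInstanceAs (Module k V)

instance (V : Type v) [AddCommGroup V] : LieRing (AbelianLieOf V) where
  bracket _ _ := 0
  add_lie _ _ _ := by simp
  lie_add _ _ _ := by simp
  lie_self _ := rfl
  leibniz_lie _ _ _ := by simp

instance (V : Type v) [AddCommGroup V] [Module k V] : LieAlgebra k (AbelianLieOf V) where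
  lie_smul _ _ _ := by
    show (0 : AbelianLieOf V) = _ • (0 : AbelianLieOf V)
    simp

/-- A decomposition of `L` as the direct sum of a Heisenberg algebra `H(m)` and an
abelian Lie algebra of dimension `j`. -/
structure HeisenbergAbelianDecomp (m j : ℕ) where
  H : Type u
  A : Type u
  [instHL : LieRing H]
  [instHA : LieAlgebra k H]
  [instAL : LieRing A]
  [instAA : LieAlgebra k A]
  heis : IsHeisenberg k H m
  abel : IsLieAbelian A
  dimA : Module.finrank k A = j
  equiv : Nonempty (L ≃ₗ⁅k⁆ H × A)

/-- The projection `H × A → H` as a Lie algebra morphism. -/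
def lieFst (H A : Type u) [LieRing H] [LieAlgebra k H] [LieRing A] [LieAlgebra k A] :
    H × A →ₗ⁅k⁆ H :=
  { toLinearMap := LinearMap.fst k H A
    map_lie' := rfl }

end more

section EpiProof

variable (k : Type) [Field k]
variable (L : Type u) [LieRing L] [LieAlgebra k L]

/-- The ideal `⁅R, F⁆` for the canonical free presentation. -/
noncomputable def starIdeal : LieIdeal k (FreeLieAlgebra k L) :=
  ⁅(pres k L).ker, (⊤ : LieIdeal k (FreeLieAlgebra k L))⁆

/-- The canonical central extension `F/⁅R,F⁆`. -/
abbrev EStar : Type u := FreeLieAlgebra k L ⧸ starIdeal k L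

lemma starIdeal_le_ker : starIdeal k L ≤ (pres k L).ker := by
  rw [starIdeal, LieSubmodule.lieIdeal_oper_eq_span, LieSubmodule.lieSpan_le]
  rintro a ⟨x, n, rfl⟩
  rw [SetLike.mem_coe, LieHom.mem_ker, LieHom.map_lie]
  have hx : pres k L (x : FreeLieAlgebra k L) = 0 := x.2
  rw [hx, zero_lie]

/-- The projection `F/⁅R,F⁆ → L`. -/
noncomputable def phiStar : EStar k L →ₗ⁅k⁆ L :=
  lieQuotLift (starIdeal k L) (pres k L) (starIdeal_le_ker k L)

@[simp] lemma phiStar_mk (x : FreeLieAlgebra k L) :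
    phiStar k L (lieQuotMk k _ (starIdeal k L) x) = pres k L x := rfl

lemma pres_surjective : Function.Surjective (pres k L) := fun x =>
  ⟨FreeLieAlgebra.of k x, by simp [pres]⟩

omit [LieRing L] [LieAlgebra k L] in
lemma mk_surj (I : LieIdeal k (FreeLieAlgebra k L)) :
    Function.Surjective (lieQuotMk k _ I) :=
  Submodule.mkQ_surjective _

lemma phiStar_surjective : Function.Surjective (phiStar k L) := by
  intro x
  obtain ⟨y, hy⟩ := pres_surjective k L x
  exact ⟨lieQuotMk k _ (starIdeal k L) y, hy⟩

lemma ker_phiStar_le_center :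
    (phiStar k L).ker ≤ LieAlgebra.center k (EStar k L) := by
  intro e he
  rw [LieHom.mem_ker] at he
  obtain ⟨x, rfl⟩ := mk_surj k L _ e
  have hx : x ∈ (pres k L).ker := by rwa [LieHom.mem_ker, ← phiStar_mk]
  rw [LieModule.mem_maxTrivSubmodule]
  intro e'
  obtain ⟨y, rfl⟩ := mk_surj k L _ e'
  have : (lieQuotMk k _ (starIdeal k L)) ⁅y, x⁆ = 0 := by
    rw [show lieQuotMk k _ (starIdeal k L) ⁅y, x⁆ =
        LieSubmodule.Quotient.mk' (starIdeal k L) ⁅y, x⁆ from rfl,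
      LieSubmodule.Quotient.mk_eq_zero]
    have h1 : ⁅x, y⁆ ∈ starIdeal k L :=
      LieSubmodule.lie_mem_lie hx (LieSubmodule.mem_top y)
    rw [← lie_skew]
    exact neg_mem h1
  rw [← (lieQuotMk k _ (starIdeal k L)).map_lie, this]

/-- `phiStar` is a central extension. -/
lemma phiStar_central : IsCentralExtension k L (phiStar k L) :=
  ⟨phiStar_surjective k L, ker_phiStar_le_center k L⟩

/-- The image of the centre of `EStar` under `phiStar`, as a Lie ideal. -/
noncomputable def phiStarImage : LieIdeal k L :=
  { Submodule.map (phiStar k L).toLinearMap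
      (LieAlgebra.center k (EStar k L)).toSubmodule with
    lie_mem := by
      rintro x m ⟨z, hz, rfl⟩
      obtain ⟨w, rfl⟩ := phiStar_surjective k L x
      have hz' : z ∈ LieAlgebra.center k (EStar k L) := hz
      rw [LieModule.mem_maxTrivSubmodule] at hz'
      refine ⟨⁅w, z⁆, ?_, by simp [LieHom.map_lie]⟩
      show ⁅w, z⁆ ∈ LieAlgebra.center k (EStar k L)
      rw [hz' w]
      exact zero_mem _ }

lemma phiStarImage_coe :
    (phiStarImage k L : Set L) =
      phiStar k L '' (LieAlgebra.center k (EStar k L)) := rfl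

/-- Minimality of `phiStar`'s central image among all central extensions. -/
lemma phiStar_image_min {M : Type u} [LieRing M] [LieAlgebra k M] (ψ : M →ₗ⁅k⁆ L)
    (h : IsCentralExtension k L ψ) :
    (phiStar k L '' (LieAlgebra.center k (EStar k L))) ⊆
      ψ '' (LieAlgebra.center k M) := by
  classical
  obtain ⟨hsurj, hker⟩ := h
  -- a set-theoretic section of ψ
  choose s hs using hsurj
  set θ : FreeLieAlgebra k L →ₗ⁅k⁆ M := FreeLieAlgebra.lift k s with hθdef
  have hψθ : ∀ a, ψ (θ a) = pres k L a := by
    have : (ψ.comp θ) = pres k L := by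
      apply FreeLieAlgebra.hom_ext
      intro x
      simp [hθdef, pres, hs]
    intro a
    have h := DFunLike.congr_fun this a
    simpa using h
  have hθR : ∀ a ∈ (pres k L).ker, θ a ∈ LieAlgebra.center k M := by
    intro a ha
    apply hker
    rw [LieHom.mem_ker, hψθ]
    rwa [LieHom.mem_ker] at ha
  have hθstar : starIdeal k L ≤ θ.ker := by
    rw [starIdeal, LieSubmodule.lieIdeal_oper_eq_span, LieSubmodule.lieSpan_le]
    rintro a ⟨x, n, rfl⟩
    rw [SetLike.mem_coe, LieHom.mem_ker, LieHom.map_lie]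
    have hc := hθR (x : FreeLieAlgebra k L) x.2
    rw [LieModule.mem_maxTrivSubmodule] at hc
    rw [← lie_skew, hc, neg_zero]
  set θbar : EStar k L →ₗ⁅k⁆ M := lieQuotLift (starIdeal k L) θ hθstar with hθbar
  have hψθbar : ∀ e, ψ (θbar e) = phiStar k L e := by
    intro e
    obtain ⟨a, rfl⟩ := mk_surj k L _ e
    show ψ (θ a) = pres k L a
    exact hψθ a
  -- θbar maps the centre to the centre
  have hcent : ∀ z ∈ LieAlgebra.center k (EStar k L), θbar z ∈ LieAlgebra.center k M := by
    intro z hz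
    rw [LieModule.mem_maxTrivSubmodule] at hz ⊢
    intro m
    obtain ⟨e, he⟩ := phiStar_surjective k L (ψ m)
    have hmem : m - θbar e ∈ ψ.ker := by
      rw [LieHom.mem_ker, map_sub, hψθbar, he, sub_self]
    have hc := hker hmem
    rw [LieModule.mem_maxTrivSubmodule] at hc
    have : ⁅m, θbar z⁆ = ⁅θbar e, θbar z⁆ + ⁅m - θbar e, θbar z⁆ := by
      rw [← add_lie]
      have hm : θbar e + (m - θbar e) = m := by abel
      rw [hm]
    rw [this, ← LieHom.map_lie, hz e, map_zero, zero_add,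
      ← lie_skew, hc, neg_zero]
  rintro x ⟨z, hz, rfl⟩
  exact ⟨θbar z, hcent z hz, hψθbar z⟩

end EpiProof

/-- A finite-dimensional Lie algebra over a field is capable if and only if
its epicenter is trivial. -/
theorem capable_iff_epicenter_eq_bot (k : Type) [Field k] (L : Type u) [LieRing L]
    [LieAlgebra k L] [Module.Finite k L] :
    IsCapable k L ↔ epicenter k L = ⊥ := by
  constructor
  · rintro ⟨H, _, _, ⟨e⟩⟩
    apply le_bot_iff.mp
    apply sInf_le
    refine ⟨H, ‹_›, ‹_›,
      (e.symm.toLieHom).comp (lieQuotMk k H (LieAlgebra.center k H)), ⟨?_, ?_⟩, ?_⟩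
    · exact e.symm.surjective.comp (Submodule.mkQ_surjective _)
    · intro x hx
      rw [LieHom.mem_ker, LieHom.comp_apply] at hx
      have h0 : lieQuotMk k H (LieAlgebra.center k H) x = 0 := by
        have hinj : Function.Injective e.symm.toLieHom := e.symm.injective
        apply hinj
        rw [map_zero]
        exact hx
      rwa [show lieQuotMk k H (LieAlgebra.center k H) x =
          LieSubmodule.Quotient.mk' (LieAlgebra.center k H) x from rfl,
        LieSubmodule.Quotient.mk_eq_zero] at h0
    · ext x
      simp only [SetLike.mem_coe, Set.mem_image, SetLike.mem_coe]
      constructor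
      · intro hx
        rw [LieSubmodule.mem_bot] at hx
        subst hx
        refine ⟨0, zero_mem _, map_zero _⟩
      · rintro ⟨z, hz, rfl⟩
        rw [LieSubmodule.mem_bot, LieHom.comp_apply]
        have h0 : lieQuotMk k H (LieAlgebra.center k H) z = 0 := by
          rw [show lieQuotMk k H (LieAlgebra.center k H) z =
              LieSubmodule.Quotient.mk' (LieAlgebra.center k H) z from rfl,
            LieSubmodule.Quotient.mk_eq_zero]
          exact hz
        rw [h0]
        exact map_zero _
  · intro h
    -- phiStarImage ≤ epicenter = ⊥
    have hmin : phiStarImage k L ≤ epicenter k L := by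
      apply le_sInf
      rintro I ⟨E, _, _, ψ, hψ, hI⟩
      intro x hx
      have hx' : x ∈ (phiStarImage k L : Set L) := hx
      rw [phiStarImage_coe] at hx'
      have := phiStar_image_min k L ψ hψ hx'
      show x ∈ (I : Set L)
      rw [hI]
      exact this
    rw [h, le_bot_iff] at hmin
    -- hence Z(EStar) = ker phiStar
    have hZker : LieAlgebra.center k (EStar k L) ≤ (phiStar k L).ker := by
      intro z hz
      have : phiStar k L z ∈ (phiStarImage k L : Set L) := ⟨z, hz, rfl⟩
      rw [hmin] at this
      rw [LieHom.mem_ker]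
      simpa using this
    refine ⟨EStar k L, inferInstance, inferInstance, ⟨?_⟩⟩
    have hle : LieAlgebra.center k (EStar k L) ≤ (phiStar k L).ker := hZker
    set f : (EStar k L ⧸ LieAlgebra.center k (EStar k L)) →ₗ⁅k⁆ L :=
      lieQuotLift (LieAlgebra.center k (EStar k L)) (phiStar k L) hle with hf
    have hbij : Function.Bijective f := by
      constructor
      · intro a b hab
        obtain ⟨x, rfl⟩ := Submodule.mkQ_surjective
          ((LieAlgebra.center k (EStar k L)) : Submodule k (EStar k L)) a
        obtain ⟨y, rfl⟩ := Submodule.mkQ_surjective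
          ((LieAlgebra.center k (EStar k L)) : Submodule k (EStar k L)) b
        have : phiStar k L x = phiStar k L y := hab
        have hxy : x - y ∈ (phiStar k L).ker := by
          rw [LieHom.mem_ker, map_sub, this, sub_self]
        have hc := ker_phiStar_le_center k L hxy
        exact (Submodule.Quotient.eq _).mpr hc
      · intro x
        obtain ⟨y, hy⟩ := phiStar_surjective k L x
        exact ⟨Submodule.mkQ _ y, hy⟩
    exact (LieEquiv.ofBijective f hbij).symm
end

section
/- Let L be a finite-dimensional Lie algebra and N a central ideal of L. Then a central ideal N is contained in the exterior center Z^∧(L) if and only if the natural map L ∧ L → (L/N) ∧ (L/N) is injective. -/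
open Module Function

universe u v

section WedgeLemmas

variable (k : Type) [Field k] {M : Type v} [LieRing M] [LieAlgebra k M]

lemma wedge_add_left (x x' y : M) :
    wedge k (x + x') y = wedge k x y + wedge k x' y := by
  have h := wedge_mem_rel_zero k (M := M)
    (a := FreeLieAlgebra.of k (x + x', y) - FreeLieAlgebra.of k (x, y)
      - FreeLieAlgebra.of k (x', y)) (Or.inl ⟨x, x', y, rfl⟩)
  simp only [map_sub, ← wedge_def] at h
  rwa [sub_sub, sub_eq_zero] at h

lemma wedge_add_right (x y y' : M) :
    wedge k x (y + y') = wedge k x y + wedge k x y' := by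
  have h := wedge_mem_rel_zero k (M := M)
    (a := FreeLieAlgebra.of k (x, y + y') - FreeLieAlgebra.of k (x, y)
      - FreeLieAlgebra.of k (x, y')) (Or.inr (Or.inl ⟨x, y, y', rfl⟩))
  simp only [map_sub, ← wedge_def] at h
  rwa [sub_sub, sub_eq_zero] at h

lemma wedge_smul_left (c : k) (x y : M) :
    wedge k (c • x) y = c • wedge k x y := by
  have h := wedge_mem_rel_zero k (M := M)
    (a := FreeLieAlgebra.of k (c • x, y) - c • FreeLieAlgebra.of k (x, y))
    (Or.inr (Or.inr (Or.inl ⟨c, x, y, rfl⟩)))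
  simp only [map_sub, map_smul, ← wedge_def] at h
  rwa [sub_eq_zero] at h

lemma wedge_smul_right (c : k) (x y : M) :
    wedge k x (c • y) = c • wedge k x y := by
  have h := wedge_mem_rel_zero k (M := M)
    (a := FreeLieAlgebra.of k (x, c • y) - c • FreeLieAlgebra.of k (x, y))
    (Or.inr (Or.inr (Or.inr (Or.inl ⟨c, x, y, rfl⟩))))
  simp only [map_sub, map_smul, ← wedge_def] at h
  rwa [sub_eq_zero] at h

lemma wedge_lie_left (x x' y : M) :
    wedge k ⁅x, x'⁆ y = wedge k x ⁅x', y⁆ - wedge k x' ⁅x, y⁆ := by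
  have h := wedge_mem_rel_zero k (M := M)
    (a := FreeLieAlgebra.of k (⁅x, x'⁆, y) - FreeLieAlgebra.of k (x, ⁅x', y⁆)
      + FreeLieAlgebra.of k (x', ⁅x, y⁆))
    (Or.inr (Or.inr (Or.inr (Or.inr (Or.inl ⟨x, x', y, rfl⟩)))))
  simp only [map_sub, map_add, ← wedge_def] at h
  linear_combination (norm := abel) h

lemma wedge_lie_right (x y y' : M) :
    wedge k x ⁅y, y'⁆ = wedge k ⁅y', x⁆ y - wedge k ⁅y, x⁆ y' := by
  have h := wedge_mem_rel_zero k (M := M)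
    (a := FreeLieAlgebra.of k (x, ⁅y, y'⁆) - FreeLieAlgebra.of k (⁅y', x⁆, y)
      + FreeLieAlgebra.of k (⁅y, x⁆, y'))
    (Or.inr (Or.inr (Or.inr (Or.inr (Or.inr (Or.inl ⟨x, y, y', rfl⟩))))))
  simp only [map_sub, map_add, ← wedge_def] at h
  linear_combination (norm := abel) h

lemma wedge_bracket (x y x' y' : M) :
    ⁅wedge k x y, wedge k x' y'⁆ = -wedge k ⁅y, x⁆ ⁅x', y'⁆ := by
  have h := wedge_mem_rel_zero k (M := M)
    (a := ⁅FreeLieAlgebra.of k (x, y), FreeLieAlgebra.of k (x', y')⁆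
      + FreeLieAlgebra.of k (⁅y, x⁆, ⁅x', y'⁆))
    (Or.inr (Or.inr (Or.inr (Or.inr (Or.inr (Or.inr (Or.inl ⟨x, y, x', y', rfl⟩)))))))
  simp only [map_add, LieHom.map_lie, ← wedge_def] at h
  exact eq_neg_of_add_eq_zero_left h

lemma wedge_self (x : M) : wedge k x x = 0 := by
  have h := wedge_mem_rel_zero k (M := M)
    (a := FreeLieAlgebra.of k (x, x))
    (Or.inr (Or.inr (Or.inr (Or.inr (Or.inr (Or.inr (Or.inr ⟨x, rfl⟩)))))))
  rwa [← wedge_def] at h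

lemma wedge_zero_left (y : M) : wedge k 0 y = 0 := by
  have h := wedge_add_left k (0 : M) 0 y
  rw [add_zero] at h
  exact (left_eq_add.mp h)

lemma wedge_zero_right (x : M) : wedge k x 0 = 0 := by
  have h := wedge_add_right k x (0 : M) 0
  rw [add_zero] at h
  exact (left_eq_add.mp h)

lemma wedge_antisymm (x y : M) : wedge k y x = -wedge k x y := by
  have h := wedge_self k (x + y)
  rw [wedge_add_left, wedge_add_right, wedge_add_right, wedge_self, wedge_self] at h
  linear_combination (norm := abel) h

end WedgeLemmas

section Retraction

variable (k : Type) [Field k] (L : Type u) [LieRing L] [LieAlgebra k L]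
variable (N : LieIdeal k L)

/-- `wedge` as a linear map in the second variable. -/
noncomputable def wedgeRight (x : L) : L →ₗ[k] ExteriorSquare k L where
  toFun := wedge k x
  map_add' := wedge_add_right k x
  map_smul' := fun c y => wedge_smul_right k c x y

variable {L N} in
/-- `wedge` descends to a bilinear map on `L ⧸ N` when `N` consists of
wedge-degenerate elements. -/
noncomputable def wedgeQ (hZ : ∀ n ∈ N, ∀ y : L, wedge k n y = 0) :
    (L ⧸ N) →ₗ[k] (L ⧸ N) →ₗ[k] ExteriorSquare k L :=
  Submodule.liftQ (N : Submodule k L)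
    { toFun := fun x => Submodule.liftQ (N : Submodule k L) (wedgeRight k L x) (by
        intro n hn
        simp only [LinearMap.mem_ker, wedgeRight, LinearMap.coe_mk, AddHom.coe_mk]
        rw [wedge_antisymm, hZ n hn x, neg_zero])
      map_add' := fun x x' => by
        ext y
        obtain ⟨y, rfl⟩ := Submodule.Quotient.mk_surjective _ y
        show wedge k (x + x') y = wedge k x y + wedge k x' y
        exact wedge_add_left k x x' y
      map_smul' := fun c x => by
        ext y
        obtain ⟨y, rfl⟩ := Submodule.Quotient.mk_surjective _ y
        show wedge k (c • x) y = c • wedge k x y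
        exact wedge_smul_left k c x y }
    (by
      intro n hn
      rw [LinearMap.mem_ker]
      ext y
      obtain ⟨y, rfl⟩ := Submodule.Quotient.mk_surjective _ y
      show wedge k n y = 0
      exact hZ n hn y)

variable {L N} in
lemma wedgeQ_mk (hZ : ∀ n ∈ N, ∀ y : L, wedge k n y = 0) (x y : L) :
    wedgeQ k hZ (lieQuotMk k L N x) (lieQuotMk k L N y) = wedge k x y := rfl

variable {L N} in
/-- The lift to the free Lie algebra of the retraction `(L/N) ∧ (L/N) → L ∧ L`. -/
noncomputable def retrAux (hZ : ∀ n ∈ N, ∀ y : L, wedge k n y = 0) :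
    FreeLieAlgebra k ((L ⧸ N) × (L ⧸ N)) →ₗ⁅k⁆ ExteriorSquare k L :=
  FreeLieAlgebra.lift k fun p => wedgeQ k hZ p.1 p.2

variable {L N} in
lemma retrAux_rels (hZ : ∀ n ∈ N, ∀ y : L, wedge k n y = 0) :
    exteriorIdeal k (L ⧸ N) ≤ (retrAux k hZ).ker := by
  rw [exteriorIdeal, LieSubmodule.lieSpan_le]
  intro a ha
  rw [SetLike.mem_coe, LieHom.mem_ker]
  set q := lieQuotMk k L N with hq
  have hsurj : Function.Surjective q := Submodule.Quotient.mk_surjective _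
  have key : ∀ u v : L ⧸ N, retrAux k hZ (FreeLieAlgebra.of k (u, v)) = wedgeQ k hZ u v :=
    fun u v => by rw [retrAux, FreeLieAlgebra.lift_of_apply]
  have keym : ∀ x y : L, retrAux k hZ (FreeLieAlgebra.of k (q x, q y)) = wedge k x y :=
    fun x y => by rw [key]; rfl
  obtain h|h|h|h|h|h|h|h := ha
  · obtain ⟨u, u', v, rfl⟩ := h
    simp only [map_sub, key, map_add, LinearMap.add_apply]
    abel
  · obtain ⟨u, v, v', rfl⟩ := h
    simp only [map_sub, key, map_add]
    abel
  · obtain ⟨c, u, v, rfl⟩ := h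
    simp only [map_sub, map_smul, key, map_smul, LinearMap.smul_apply]
    abel
  · obtain ⟨c, u, v, rfl⟩ := h
    simp only [map_sub, map_smul, key, map_smul]
    abel
  · obtain ⟨u, u', v, rfl⟩ := h
    obtain ⟨x, rfl⟩ := hsurj u
    obtain ⟨x', rfl⟩ := hsurj u'
    obtain ⟨y, rfl⟩ := hsurj v
    simp only [map_sub, map_add, ← q.map_lie, keym]
    rw [wedge_lie_left]
    abel
  · obtain ⟨u, v, v', rfl⟩ := h
    obtain ⟨x, rfl⟩ := hsurj u
    obtain ⟨y, rfl⟩ := hsurj v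
    obtain ⟨y', rfl⟩ := hsurj v'
    simp only [map_sub, map_add, ← q.map_lie, keym]
    rw [wedge_lie_right]
    abel
  · obtain ⟨u, v, u', v', rfl⟩ := h
    obtain ⟨x, rfl⟩ := hsurj u
    obtain ⟨y, rfl⟩ := hsurj v
    obtain ⟨x', rfl⟩ := hsurj u'
    obtain ⟨y', rfl⟩ := hsurj v'
    simp only [map_add, LieHom.map_lie]
    simp only [← q.map_lie, keym]
    rw [wedge_bracket]
    abel
  · obtain ⟨u, rfl⟩ := h
    obtain ⟨x, rfl⟩ := hsurj u
    rw [keym, wedge_self]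

variable {L N} in
/-- The retraction `(L/N) ∧ (L/N) → L ∧ L`. -/
noncomputable def retr (hZ : ∀ n ∈ N, ∀ y : L, wedge k n y = 0) :
    ExteriorSquare k (L ⧸ N) →ₗ⁅k⁆ ExteriorSquare k L :=
  lieQuotLift (exteriorIdeal k (L ⧸ N)) (retrAux k hZ) (retrAux_rels k hZ)

lemma extSqMap_wedge (x y : L) :
    extSqMap k L N (wedge k x y) =
      wedge k (lieQuotMk k L N x) (lieQuotMk k L N y) := by
  rw [wedge_def, extSqMap, lieQuotLift_mk, extAux, FreeLieAlgebra.lift_of_apply]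

variable {L N} in
lemma retr_extSqMap (hZ : ∀ n ∈ N, ∀ y : L, wedge k n y = 0) (z : ExteriorSquare k L) :
    retr k hZ (extSqMap k L N z) = z := by
  obtain ⟨a, rfl⟩ : ∃ a, lieQuotMk k _ (exteriorIdeal k L) a = z :=
    Submodule.Quotient.mk_surjective _ z
  have h : ((retr k hZ).comp (extSqMap k L N)).comp (lieQuotMk k _ (exteriorIdeal k L)) =
      lieQuotMk k _ (exteriorIdeal k L) := by
    apply FreeLieAlgebra.hom_ext
    intro p
    obtain ⟨x, y⟩ := p
    show retr k hZ (extSqMap k L N (wedge k x y)) = wedge k x y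
    rw [extSqMap_wedge, wedge_def, retr, lieQuotLift_mk, retrAux,
      FreeLieAlgebra.lift_of_apply, wedgeQ_mk]
  exact congrArg (fun f : _ →ₗ⁅k⁆ _ => f a) h

end Retraction

/-- A central ideal `N` is contained in the exterior center `Z^∧(L)` iff the
natural map `L ∧ L → (L/N) ∧ (L/N)` is injective. -/
theorem central_ideal_le_exteriorCenter_iff (k : Type) [Field k] (L : Type u) [LieRing L]
    [LieAlgebra k L] [Module.Finite k L] (N : LieIdeal k L)
    (hN : N ≤ LieAlgebra.center k L) :
    (N : Set L) ⊆ exteriorCenter k L ↔ Function.Injective (extSqMap k L N) := by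
  constructor
  · intro hsub
    have hZ : ∀ n ∈ N, ∀ y : L, wedge k n y = 0 := fun n hn y => hsub hn y
    exact Function.LeftInverse.injective (retr_extSqMap k hZ)
  · intro hinj n hn y
    apply hinj
    rw [extSqMap_wedge]
    have hn0 : lieQuotMk k L N n = 0 := (Submodule.Quotient.mk_eq_zero _).mpr hn
    rw [hn0, wedge_zero_left, map_zero]
end

section
/- For finite-dimensional Lie algebras L₁ and L₂, the exterior center satisfies Z^∧(L₁ ⊕ L₂) ⊆ Z^∧(L₁) ⊕ Z^∧(L₂). -/
open Module Function

universe u v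

section functorial

variable (k : Type) [Field k]
variable {L : Type u} [LieRing L] [LieAlgebra k L]
variable {M : Type v} [LieRing M] [LieAlgebra k M]

/-- The lift to the free Lie algebra of `(x, y) ↦ f x ∧ f y`. -/
noncomputable def extAuxHom (f : L →ₗ⁅k⁆ M) :
    FreeLieAlgebra k (L × L) →ₗ⁅k⁆ ExteriorSquare k M :=
  FreeLieAlgebra.lift k fun p => wedge k (f p.1) (f p.2)

lemma extAuxHom_rels (f : L →ₗ⁅k⁆ M) : exteriorIdeal k L ≤ (extAuxHom k f).ker := by
  rw [exteriorIdeal, LieSubmodule.lieSpan_le]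
  intro a ha
  rw [SetLike.mem_coe, LieHom.mem_ker]
  set q := f with hq
  have key : ∀ x y : L, extAuxHom k q (FreeLieAlgebra.of k (x, y)) =
      lieQuotMk k _ (exteriorIdeal k M) (FreeLieAlgebra.of k (q x, q y)) := by
    intro x y; rw [extAuxHom, FreeLieAlgebra.lift_of_apply]; rfl
  obtain h|h|h|h|h|h|h|h := ha
  · obtain ⟨x, x', y, rfl⟩ := h
    simp only [map_sub, key]
    rw [← map_sub, ← map_sub]
    apply wedge_mem_rel_zero
    exact Or.inl ⟨q x, q x', q y, by rw [map_add]⟩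
  · obtain ⟨x, y, y', rfl⟩ := h
    simp only [map_sub, key]
    rw [← map_sub, ← map_sub]
    apply wedge_mem_rel_zero
    exact Or.inr (Or.inl ⟨q x, q y, q y', by rw [map_add]⟩)
  · obtain ⟨c, x, y, rfl⟩ := h
    simp only [map_sub, map_smul, key]
    rw [← map_smul (lieQuotMk k _ (exteriorIdeal k M)) c
      (FreeLieAlgebra.of k (q x, q y)), ← map_sub]
    apply wedge_mem_rel_zero
    exact Or.inr (Or.inr (Or.inl ⟨c, q x, q y, rfl⟩))
  · obtain ⟨c, x, y, rfl⟩ := h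
    simp only [map_sub, map_smul, key]
    rw [← map_smul (lieQuotMk k _ (exteriorIdeal k M)) c
      (FreeLieAlgebra.of k (q x, q y)), ← map_sub]
    apply wedge_mem_rel_zero
    exact Or.inr (Or.inr (Or.inr (Or.inl ⟨c, q x, q y, rfl⟩)))
  · obtain ⟨x, x', y, rfl⟩ := h
    simp only [map_sub, map_add, key]
    rw [← map_sub, ← map_add]
    apply wedge_mem_rel_zero
    refine Or.inr (Or.inr (Or.inr (Or.inr (Or.inl ⟨q x, q x', q y, ?_⟩))))
    simp [LieHom.map_lie]
  · obtain ⟨x, y, y', rfl⟩ := h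
    simp only [map_sub, map_add, key]
    rw [← map_sub, ← map_add]
    apply wedge_mem_rel_zero
    refine Or.inr (Or.inr (Or.inr (Or.inr (Or.inr (Or.inl ⟨q x, q y, q y', ?_⟩)))))
    simp [LieHom.map_lie]
  · obtain ⟨x, y, x', y', rfl⟩ := h
    simp only [map_add, LieHom.map_lie, key]
    rw [← LieHom.map_lie, ← map_add]
    apply wedge_mem_rel_zero
    refine Or.inr (Or.inr (Or.inr (Or.inr (Or.inr (Or.inr (Or.inl
      ⟨q x, q y, q x', q y', ?_⟩))))))
    simp [LieHom.map_lie]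
  · obtain ⟨x, rfl⟩ := h
    rw [key]
    apply wedge_mem_rel_zero
    exact Or.inr (Or.inr (Or.inr (Or.inr (Or.inr (Or.inr (Or.inr ⟨q x, rfl⟩))))))

/-- Functoriality of the exterior square. -/
noncomputable def extSqHom (f : L →ₗ⁅k⁆ M) :
    ExteriorSquare k L →ₗ⁅k⁆ ExteriorSquare k M :=
  lieQuotLift (exteriorIdeal k L) (extAuxHom k f) (extAuxHom_rels k f)

lemma extSqHom_wedge (f : L →ₗ⁅k⁆ M) (x y : L) :
    extSqHom k f (wedge k x y) = wedge k (f x) (f y) := by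
  rw [wedge_def, extSqHom, lieQuotLift_mk, extAuxHom, FreeLieAlgebra.lift_of_apply]

/-- The projection `H × A → A` as a Lie algebra morphism. -/
def lieSnd (H A : Type u) [LieRing H] [LieAlgebra k H] [LieRing A] [LieAlgebra k A] :
    H × A →ₗ⁅k⁆ A :=
  { toLinearMap := LinearMap.snd k H A
    map_lie' := rfl }

end functorial

/-- `Z^∧(L₁ ⊕ L₂) ⊆ Z^∧(L₁) ⊕ Z^∧(L₂)`. -/
theorem exteriorCenter_prod_le (k : Type) [Field k] (L₁ L₂ : Type u) [LieRing L₁]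
    [LieAlgebra k L₁] [LieRing L₂] [LieAlgebra k L₂] [Module.Finite k L₁]
    [Module.Finite k L₂] :
    exteriorCenter k (L₁ × L₂) ⊆ (exteriorCenter k L₁) ×ˢ (exteriorCenter k L₂) := by
  rintro ⟨x₁, x₂⟩ hx
  constructor
  · intro y
    have h := congrArg (extSqHom k (lieFst k L₁ L₂)) (hx (y, 0))
    rwa [extSqHom_wedge, map_zero] at h
  · intro y
    have h := congrArg (extSqHom k (lieSnd k L₁ L₂)) (hx (0, y))
    rwa [extSqHom_wedge, map_zero] at h
end
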